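/- arXiv:1802.02466 — 4 statements merged into one kernel-verified Lean document; each statement's English description precedes it below -/
import Mathlib

section
/- Define f(α) = (3/4)[(3α−π)cos α + 2 sin α − 2 sin 2α + sin 3α] for π/3 ≤ α < π/2, f(α) = (1/4)[3(π−α)cos α + 3 sin α − 2 sin 2α] for π/2 ≤ α ≤ π, and f(α) = 0 otherwise. Then ∫₀^π f(α) dα = 1. -/
open Real MeasureTheory intervalIntegral

lemma aux_integral_congr_Ioo {F g : ℝ → ℝ} {a b : ℝ} (hab : a ≤ b)
    (hg : ContinuousOn g (Set.Icc a b))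
    (h : ∀ x ∈ Set.Ioo a b, F x = g x) :
    IntervalIntegrable F volume a b ∧ (∫ x in a..b, F x) = ∫ x in a..b, g x := by
  have hne : ∀ᵐ x : ℝ, x ≠ b := by
    rw [MeasureTheory.ae_iff]
    have : {x : ℝ | ¬ x ≠ b} = {b} := by ext x; simp
    rw [this]
    exact Real.volume_singleton
  have hgi : IntervalIntegrable g volume a b := by
    have huIcc : Set.uIcc a b = Set.Icc a b := Set.uIcc_of_le hab
    exact (huIcc ▸ hg).intervalIntegrable
  constructor
  · rw [intervalIntegrable_iff_integrableOn_Ioc_of_le hab] at hgi ⊢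
    refine hgi.congr ?_
    filter_upwards [MeasureTheory.ae_restrict_of_ae hne,
      MeasureTheory.ae_restrict_mem measurableSet_Ioc] with x hx hmem
    exact (h x ⟨hmem.1, lt_of_le_of_ne hmem.2 hx⟩).symm
  · refine intervalIntegral.integral_congr_ae ?_
    filter_upwards [hne] with x hx hmem
    rw [Set.uIoc_of_le hab] at hmem
    exact h x ⟨hmem.1, lt_of_le_of_ne hmem.2 hx⟩

theorem stmt_3 (f : ℝ → ℝ)
    (hf : ∀ α : ℝ, f α =
      if π/3 ≤ α ∧ α < π/2 then
        (3/4) * ((3*α - π) * Real.cos α + 2 * Real.sin α - 2 * Real.sin (2*α) + Real.sin (3*α))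
      else if π/2 ≤ α ∧ α ≤ π then
        (1/4) * (3*(π - α) * Real.cos α + 3 * Real.sin α - 2 * Real.sin (2*α))
      else 0) :
    (∫ α in (0:ℝ)..π, f α) = 1 := by
  have hpi : (0:ℝ) < π := Real.pi_pos
  have h03 : (0:ℝ) ≤ π/3 := by linarith
  have h32 : π/3 ≤ π/2 := by linarith
  have h2p : π/2 ≤ π := by linarith
  set g1 : ℝ → ℝ := fun α =>
    (3/4) * ((3*α - π) * Real.cos α + 2 * Real.sin α - 2 * Real.sin (2*α) + Real.sin (3*α)) with hg1
  set g2 : ℝ → ℝ := fun α =>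
    (1/4) * (3*(π - α) * Real.cos α + 3 * Real.sin α - 2 * Real.sin (2*α)) with hg2
  -- piece 1 : f = 0 on Ioo 0 (π/3)
  have K1 := aux_integral_congr_Ioo (F := f) (g := fun _ => (0:ℝ)) h03
    continuousOn_const (by
      intro x hx
      rw [hf x]
      rw [if_neg, if_neg]
      · rintro ⟨h1, _⟩; linarith [hx.2]
      · rintro ⟨h1, _⟩; linarith [hx.2])
  have K2 := aux_integral_congr_Ioo (F := f) (g := g1) h32
    (by fun_prop) (by
      intro x hx
      rw [hf x, if_pos ⟨le_of_lt hx.1, hx.2⟩])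
  have K3 := aux_integral_congr_Ioo (F := f) (g := g2) h2p
    (by fun_prop) (by
      intro x hx
      rw [hf x, if_neg, if_pos ⟨le_of_lt hx.1, hx.2.le⟩]
      rintro ⟨_, h2⟩; linarith [hx.1])
  -- split the integral
  have split1 : (∫ α in (0:ℝ)..π, f α)
      = (∫ α in (0:ℝ)..(π/3), f α) + ∫ α in (π/3)..π, f α :=
    (intervalIntegral.integral_add_adjacent_intervals K1.1 (K2.1.trans K3.1)).symm
  have split2 : (∫ α in (π/3)..π, f α)
      = (∫ α in (π/3)..(π/2), f α) + ∫ α in (π/2)..π, f α :=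
    (intervalIntegral.integral_add_adjacent_intervals K2.1 K3.1).symm
  -- antiderivatives
  set F1 : ℝ → ℝ := fun x =>
    (3/4) * ((3*x - π) * Real.sin x + Real.cos x + Real.cos (2*x) - Real.cos (3*x)/3) with hF1d
  set F2 : ℝ → ℝ := fun x =>
    (1/4) * (3*(π - x) * Real.sin x - 6 * Real.cos x + Real.cos (2*x)) with hF2d
  have hd1 : ∀ x : ℝ, HasDerivAt F1 (g1 x) x := by
    intro x
    have h2x : HasDerivAt (fun x : ℝ => Real.cos (2*x)) (-Real.sin (2*x) * 2) x :=
      (Real.hasDerivAt_cos (2*x)).comp x (by simpa using (hasDerivAt_id x).const_mul (2:ℝ))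
    have h3x : HasDerivAt (fun x : ℝ => Real.cos (3*x)) (-Real.sin (3*x) * 3) x :=
      (Real.hasDerivAt_cos (3*x)).comp x (by simpa using (hasDerivAt_id x).const_mul (3:ℝ))
    have hmul : HasDerivAt (fun x : ℝ => (3*x - π) * Real.sin x)
        (3 * Real.sin x + (3*x - π) * Real.cos x) x := by
      simpa [Pi.mul_def] using (((hasDerivAt_id x).const_mul (3:ℝ)).sub_const π).mul (Real.hasDerivAt_sin x)
    have := (((hmul.add (Real.hasDerivAt_cos x)).add h2x).sub (h3x.div_const 3)).const_mul (3/4 : ℝ)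
    convert this using 1
    case e'_9 => change (3/4:ℝ) * _ = _; ring
    all_goals rfl
  have hd2 : ∀ x : ℝ, HasDerivAt F2 (g2 x) x := by
    intro x
    have h2x : HasDerivAt (fun x : ℝ => Real.cos (2*x)) (-Real.sin (2*x) * 2) x :=
      (Real.hasDerivAt_cos (2*x)).comp x (by simpa using (hasDerivAt_id x).const_mul (2:ℝ))
    have hmul : HasDerivAt (fun x : ℝ => 3*(π - x) * Real.sin x)
        (-3 * Real.sin x + 3*(π - x) * Real.cos x) x := by
      have : HasDerivAt (fun x : ℝ => 3*(π - x)) (-3) x := by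
        simpa using ((hasDerivAt_id x).const_sub π).const_mul (3:ℝ)
      simpa [Pi.mul_def] using this.mul (Real.hasDerivAt_sin x)
    have := ((hmul.sub ((Real.hasDerivAt_cos x).const_mul (6:ℝ))).add h2x).const_mul (1/4 : ℝ)
    convert this using 1
    case e'_9 => change (1/4:ℝ) * _ = _; ring
    all_goals rfl
  have I2 : (∫ α in (π/3)..(π/2), g1 α) = F1 (π/2) - F1 (π/3) :=
    intervalIntegral.integral_eq_sub_of_hasDerivAt (fun x _ => hd1 x)
      ((by fun_prop : Continuous g1).intervalIntegrable _ _)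
  have I3 : (∫ α in (π/2)..π, g2 α) = F2 π - F2 (π/2) :=
    intervalIntegral.integral_eq_sub_of_hasDerivAt (fun x _ => hd2 x)
      ((by fun_prop : Continuous g2).intervalIntegrable _ _)
  -- numeric values
  have v1 : F1 (π/3) = 1/4 := by
    simp only [hF1d]
    rw [show (2:ℝ)*(π/3) = π - π/3 by ring, show (3:ℝ)*(π/3) = π by ring,
      Real.cos_pi_sub, Real.cos_pi_div_three, Real.cos_pi]
    ring
  have v2 : F1 (π/2) = 3*π/8 - 3/4 := by
    simp only [hF1d]
    rw [show (2:ℝ)*(π/2) = π by ring, show (3:ℝ)*(π/2) = π + π/2 by ring,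
      Real.cos_pi, Real.sin_pi_div_two, Real.cos_pi_div_two, Real.cos_add,
      Real.cos_pi, Real.sin_pi, Real.cos_pi_div_two, Real.sin_pi_div_two]
    ring
  have v3 : F2 (π/2) = 3*π/8 - 1/4 := by
    simp only [hF2d]
    rw [show (2:ℝ)*(π/2) = π by ring, Real.cos_pi, Real.sin_pi_div_two, Real.cos_pi_div_two]
    ring
  have v4 : F2 π = 7/4 := by
    simp only [hF2d]
    rw [Real.sin_pi, Real.cos_pi, Real.cos_two_pi]
    ring
  rw [split1, split2, K1.2, K2.2, K3.2, I2, I3, v1, v2, v3, v4]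
  simp
  ring
end

section
/- If f(α) = (1/2)[cos α + sin α + cos 2α − 2 sin 2α] for π/2 ≤ α ≤ π and 0 otherwise, then f is nonnegative on [π/2, π] and ∫_{π/2}^{π} f(α) dα = 1. -/
open Real MeasureTheory intervalIntegral

theorem stmt_6 (f : ℝ → ℝ)
    (hf : ∀ α : ℝ, f α =
      if π/2 ≤ α ∧ α ≤ π then
        (1/2) * (Real.cos α + Real.sin α + Real.cos (2*α) - 2 * Real.sin (2*α))
      else 0) :
    (∀ α ∈ Set.Icc (π/2) π, 0 ≤ f α) ∧ (∫ α in (π/2)..π, f α) = 1 := by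
  have hle : π/2 ≤ π := by linarith [Real.pi_pos]
  constructor
  · intro α hα
    obtain ⟨h1, h2⟩ := hα
    rw [hf α, if_pos ⟨h1, h2⟩]
    have hs : 0 ≤ Real.sin α := Real.sin_nonneg_of_nonneg_of_le_pi (by linarith [Real.pi_pos]) h2
    have hc : Real.cos α ≤ 0 := Real.cos_nonpos_of_pi_div_two_le_of_le h1 (by linarith [Real.pi_pos])
    have hp := Real.sin_sq_add_cos_sq α
    rw [Real.cos_two_mul, Real.sin_two_mul]
    nlinarith [sq_nonneg (Real.sin α * Real.cos α), sq_nonneg (Real.sin α + Real.cos α),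
      sq_nonneg (Real.sin α - Real.cos α), mul_nonneg hs (neg_nonneg.mpr hc),
      sq_nonneg (1 + Real.sin α * Real.cos α)]
  · have hcong : (∫ α in (π/2)..π, f α) =
        ∫ α in (π/2)..π, (1/2) * (Real.cos α + Real.sin α + Real.cos (2*α) - 2 * Real.sin (2*α)) := by
      apply intervalIntegral.integral_congr
      intro x hx
      rw [Set.uIcc_of_le hle] at hx
      exact hf x ▸ if_pos ⟨hx.1, hx.2⟩
    rw [hcong]
    have hderiv : ∀ x ∈ Set.uIcc (π/2) π,
        HasDerivAt (fun α => (1/2) * (Real.sin α - Real.cos α + Real.sin (2*α)/2 + Real.cos (2*α)))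
          ((1/2) * (Real.cos x + Real.sin x + Real.cos (2*x) - 2 * Real.sin (2*x))) x := by
      intro x _
      have h1 : HasDerivAt (fun α : ℝ => 2*α) 2 x := by
        simpa using (hasDerivAt_id x).const_mul 2
      have hsin2 : HasDerivAt (fun α : ℝ => Real.sin (2*α)) (Real.cos (2*x) * 2) x :=
        (Real.hasDerivAt_sin (2*x)).comp x h1
      have hcos2 : HasDerivAt (fun α : ℝ => Real.cos (2*α)) (-Real.sin (2*x) * 2) x :=
        (Real.hasDerivAt_cos (2*x)).comp x h1
      have := (((Real.hasDerivAt_sin x).sub (Real.hasDerivAt_cos x)).add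
        (hsin2.div_const 2)).add hcos2
      have h := this.const_mul (1/2 : ℝ)
      exact h.congr_deriv (by ring)
    have hcont : IntervalIntegrable
        (fun α => (1/2) * (Real.cos α + Real.sin α + Real.cos (2*α) - 2 * Real.sin (2*α)))
        volume (π/2) π := by
      apply Continuous.intervalIntegrable
      fun_prop
    rw [intervalIntegral.integral_eq_sub_of_hasDerivAt hderiv hcont]
    have e1 : (2:ℝ)*(π/2) = π := by ring
    rw [e1]
    norm_num [Real.sin_pi, Real.cos_pi, Real.sin_two_pi, Real.cos_two_pi,
      Real.sin_pi_div_two, Real.cos_pi_div_two]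
end

section
/- Let g(ω) = sin(ω)/√2 on [π/4, 3π/4]. For π/2 ≤ a ≤ π, the quantity 2[∫_{π/4}^{5π/4−a} ∫_{5π/4−a}^{3π/4} g(ω₃)g(ω₂) dω₃ dω₂ + ∫_{5π/4−a}^{3π/4} ∫_{ω₂}^{3π/4} g(ω₃)g(ω₂) dω₃ dω₂] equals (1/4)[2 − 2 cos a − 2 sin a − sin 2a]. -/
open Real MeasureTheory intervalIntegral

theorem stmt_13 (g : ℝ → ℝ)
    (hg : ∀ ω ∈ Set.Icc (π/4) (3*π/4), g ω = Real.sin ω / Real.sqrt 2)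
    (a : ℝ) (ha1 : π/2 ≤ a) (ha2 : a ≤ π) :
    2 * ((∫ ω₂ in (π/4)..(5*π/4 - a), ∫ ω₃ in (5*π/4 - a)..(3*π/4), g ω₃ * g ω₂) +
         (∫ ω₂ in (5*π/4 - a)..(3*π/4), ∫ ω₃ in ω₂..(3*π/4), g ω₃ * g ω₂)) =
      (1/4) * (2 - 2 * Real.cos a - 2 * Real.sin a - Real.sin (2*a)) := by
  have hpi : (0:ℝ) < π := Real.pi_pos
  set c : ℝ := 5*π/4 - a with hc
  have hcmem : c ∈ Set.Icc (π/4) (3*π/4) := ⟨by simp only [hc]; linarith, by simp only [hc]; linarith⟩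
  have hLmem : π/4 ∈ Set.Icc (π/4) (3*π/4) := ⟨le_refl _, by linarith⟩
  have hBmem : 3*π/4 ∈ Set.Icc (π/4) (3*π/4) := ⟨by linarith, le_refl _⟩
  have hs2 : Real.sqrt 2 * Real.sqrt 2 = 2 := Real.mul_self_sqrt (by norm_num)
  have hs2pos : (0:ℝ) < Real.sqrt 2 := Real.sqrt_pos.mpr (by norm_num)
  have key : ∀ p q : ℝ, p ∈ Set.Icc (π/4) (3*π/4) → q ∈ Set.Icc (π/4) (3*π/4) →
      (∫ x in p..q, g x) = (Real.cos p - Real.cos q) / Real.sqrt 2 := by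
    intro p q hp hq
    rw [intervalIntegral.integral_congr (g := fun x => Real.sin x / Real.sqrt 2)
      (fun x hx => hg x (Set.uIcc_subset_Icc hp hq hx))]
    rw [intervalIntegral.integral_div, integral_sin]
  -- first term
  have h1 : (∫ ω₂ in (π/4)..c, ∫ ω₃ in c..(3*π/4), g ω₃ * g ω₂)
      = ((Real.cos c - Real.cos (3*π/4)) / Real.sqrt 2) *
        ((Real.cos (π/4) - Real.cos c) / Real.sqrt 2) := by
    have : ∀ ω₂, (∫ ω₃ in c..(3*π/4), g ω₃ * g ω₂)
        = ((Real.cos c - Real.cos (3*π/4)) / Real.sqrt 2) * g ω₂ := by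
      intro ω₂
      rw [intervalIntegral.integral_mul_const, key c (3*π/4) hcmem hBmem]
    simp_rw [this]
    rw [intervalIntegral.integral_const_mul, key (π/4) c hLmem hcmem]
  -- second term
  have h2 : (∫ ω₂ in c..(3*π/4), ∫ ω₃ in ω₂..(3*π/4), g ω₃ * g ω₂)
      = ((Real.cos (3*π/4))^2/4 + (Real.cos c)^2/4
          - Real.cos (3*π/4) * Real.cos c / 2) := by
    have heq : ∀ ω₂ ∈ Set.uIcc c (3*π/4), (∫ ω₃ in ω₂..(3*π/4), g ω₃ * g ω₂)
        = (Real.cos ω₂ - Real.cos (3*π/4)) * Real.sin ω₂ / 2 := by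
      intro ω₂ hω₂
      have hmem : ω₂ ∈ Set.Icc (π/4) (3*π/4) := Set.uIcc_subset_Icc hcmem hBmem hω₂
      rw [intervalIntegral.integral_mul_const, key ω₂ (3*π/4) hmem hBmem, hg ω₂ hmem]
      field_simp
      rw [Real.sq_sqrt (by norm_num)]; ring
    rw [intervalIntegral.integral_congr (g := fun ω => (Real.cos ω - Real.cos (3*π/4)) * Real.sin ω / 2) heq]
    have : ∀ x ∈ Set.uIcc c (3*π/4), HasDerivAt
        (fun ω => -(Real.cos ω)^2/4 + Real.cos (3*π/4) * Real.cos ω / 2)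
        ((Real.cos x - Real.cos (3*π/4)) * Real.sin x / 2) x := by
      intro x _
      have h := (((Real.hasDerivAt_cos x).pow 2).div_const 4).neg
      have h2' := ((Real.hasDerivAt_cos x).const_mul (Real.cos (3*π/4))).div_const 2
      have h3 := h.add h2'
      refine (h3.congr_deriv ?_).congr_of_eventuallyEq (Filter.Eventually.of_forall fun ω => ?_)
      · push_cast; ring
      · simp only [Pi.add_apply, Pi.neg_apply, Pi.pow_apply]; ring
    rw [intervalIntegral.integral_eq_sub_of_hasDerivAt this
      (Continuous.intervalIntegrable
        (((Real.continuous_cos.sub continuous_const).mul Real.continuous_sin).div_const 2) _ _)]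
    ring
  rw [h1, h2]
  have hcb : Real.cos (3*π/4) = -(Real.sqrt 2/2) := by
    have : (3:ℝ)*π/4 = π - π/4 := by ring
    rw [this, Real.cos_pi_sub, Real.cos_pi_div_four]
  have hcc : Real.cos c = -(Real.sqrt 2/2) * (Real.cos a + Real.sin a) := by
    have h5 : c = π + (π/4 - a) := by rw [hc]; ring
    rw [h5, Real.cos_add, Real.cos_pi, Real.sin_pi, Real.cos_sub, Real.cos_pi_div_four,
      Real.sin_pi_div_four]
    ring
  rw [hcb, hcc, Real.cos_pi_div_four, Real.sin_two_mul, div_mul_div_comm, hs2]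
  have h1' : Real.sin a ^2 + Real.cos a ^2 = 1 := Real.sin_sq_add_cos_sq a
  linear_combination (3/8 - (Real.cos a + Real.sin a)^2/8 - (Real.cos a + Real.sin a)/4) * hs2
    - (1/4) * h1'
end

section
/- The function f(α) = (1/2)[−cos α + sin α − cos 2α] on [π/2, π] attains its maximum at α* = 2 arctan[(−3 + √17 + √(2(5−√17)))/2], i.e., f'(α*) = 0 and f''(α*) < 0. -/
set_option maxHeartbeats 1000000

open Real

private lemma hd1 (α : ℝ) : HasDerivAt (fun x => (1/2) * (-Real.cos x + Real.sin x - Real.cos (2*x)))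
    ((1/2) * (Real.sin α + Real.cos α + 2 * Real.sin (2*α))) α := by
  have h2 : HasDerivAt (fun x : ℝ => 2 * x) 2 α := by
    simpa using (hasDerivAt_id α).const_mul 2
  have h3 : HasDerivAt (fun x : ℝ => Real.cos (2*x)) (-Real.sin (2*α) * 2) α :=
    (Real.hasDerivAt_cos (2*α)).comp α h2
  have h := (((Real.hasDerivAt_cos α).neg.add (Real.hasDerivAt_sin α)).sub h3).const_mul (1/2 : ℝ)
  refine h.congr_deriv ?_
  ring

private lemma hd2 (α : ℝ) : HasDerivAt (fun x => (1/2) * (Real.sin x + Real.cos x + 2 * Real.sin (2*x)))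
    ((1/2) * (Real.cos α - Real.sin α + 4 * Real.cos (2*α))) α := by
  have h2 : HasDerivAt (fun x : ℝ => 2 * x) 2 α := by
    simpa using (hasDerivAt_id α).const_mul 2
  have h3 : HasDerivAt (fun x : ℝ => Real.sin (2*x)) (Real.cos (2*α) * 2) α :=
    (Real.hasDerivAt_sin (2*α)).comp α h2
  have h := (((Real.hasDerivAt_sin α).add (Real.hasDerivAt_cos α)).add (h3.const_mul 2)).const_mul (1/2 : ℝ)
  refine h.congr_deriv ?_
  ring

private lemma sin_two_arctan (x : ℝ) : Real.sin (2 * Real.arctan x) = 2*x/(1+x^2) := by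
  have h : Real.sqrt (1 + x^2) ^ 2 = 1 + x^2 := Real.sq_sqrt (by positivity)
  have hne : Real.sqrt (1 + x^2) ≠ 0 := by positivity
  rw [Real.sin_two_mul, Real.sin_arctan, Real.cos_arctan]
  rw [mul_assoc, div_mul_div_comm, mul_one, ← pow_two, h]
  ring

private lemma cos_two_arctan (x : ℝ) : Real.cos (2 * Real.arctan x) = (1-x^2)/(1+x^2) := by
  have h : Real.sqrt (1 + x^2) ^ 2 = 1 + x^2 := Real.sq_sqrt (by positivity)
  have hne : Real.sqrt (1 + x^2) ≠ 0 := by positivity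
  rw [Real.cos_two_mul, Real.cos_arctan]
  rw [div_pow, one_pow, h]
  field_simp
  ring

theorem stmt_15 (f : ℝ → ℝ)
    (hf : ∀ α : ℝ, f α = (1/2) * (-Real.cos α + Real.sin α - Real.cos (2*α))) :
    let αstar := 2 * Real.arctan ((-3 + Real.sqrt 17 + Real.sqrt (2*(5 - Real.sqrt 17))) / 2)
    (∀ α ∈ Set.Icc (π/2) π, f α ≤ f αstar) ∧
      deriv f αstar = 0 ∧ deriv (deriv f) αstar < 0 := by
  intro αstar
  have hfg : f = fun x => (1/2) * (-Real.cos x + Real.sin x - Real.cos (2*x)) := funext hf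
  set s : ℝ := Real.sqrt 17 with hs_def
  have hs2 : s^2 = 17 := Real.sq_sqrt (by norm_num)
  have hsnn : 0 ≤ s := Real.sqrt_nonneg _
  have hs_lb : 4.12 < s := by nlinarith
  have hs_ub : s < 4.13 := by nlinarith
  set u : ℝ := Real.sqrt (2*(5 - s)) with hu_def
  have hu2 : u^2 = 10 - 2*s := by
    rw [hu_def, Real.sq_sqrt (by nlinarith)]; ring
  have hunn : 0 ≤ u := Real.sqrt_nonneg _
  have hu_lb : 1.31 < u := by nlinarith
  have hu_ub : u < 1.33 := by nlinarith
  set t : ℝ := (-3 + s + u)/2 with ht_def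
  have ht_lb : 1.21 < t := by rw [ht_def]; linarith
  have ht_ub : t < 1.23 := by rw [ht_def]; linarith
  have hαs : αstar = 2 * Real.arctan t := rfl
  -- key algebraic fact: t is a root of the quartic
  have hQ : t^4 + 6*t^3 - 10*t - 1 = 0 := by
    rw [ht_def]
    have e1 : s^2 - 17 = 0 := by linarith
    have e2 : u^2 + 2*s - 10 = 0 := by linarith
    linear_combination (27/16 + s^2/16 + s*u/4 - 3*s/4 - u/2) * e1 +
      (-11/4 + 3*s^2/8 + s*u/4 + u^2/16 - s/8) * e2
  -- derivative formula
  have hdf : deriv f = fun x => (1/2) * (Real.sin x + Real.cos x + 2 * Real.sin (2*x)) := by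
    funext x
    rw [hfg]
    exact (hd1 x).deriv
  -- derivative value at 2*arctan v
  have key : ∀ v : ℝ, (1/2) * (Real.sin (2*Real.arctan v) + Real.cos (2*Real.arctan v)
      + 2 * Real.sin (2*(2*Real.arctan v)))
      = -(v^4 + 6*v^3 - 10*v - 1) / (2*(1+v^2)^2) := by
    intro v
    have h1 : Real.sin (2*(2*Real.arctan v))
        = 2 * Real.sin (2*Real.arctan v) * Real.cos (2*Real.arctan v) := Real.sin_two_mul _
    rw [h1, sin_two_arctan, cos_two_arctan]
    have hv : (1:ℝ) + v^2 ≠ 0 := by positivity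
    field_simp
    ring
  -- bounds for αstar
  have hat : π/4 < Real.arctan t := by
    calc π/4 = Real.arctan 1 := Real.arctan_one.symm
    _ < Real.arctan t := Real.arctan_strictMono (by linarith)
  have hat2 : Real.arctan t < π/2 := Real.arctan_lt_pi_div_two t
  have hπ : 0 < π := Real.pi_pos
  have hαs1 : π/2 < αstar := by rw [hαs]; linarith
  have hαs2 : αstar < π := by rw [hαs]; linarith
  -- sign of derivative on the two pieces
  have hsign1 : ∀ x ∈ Set.Ioo (π/2) αstar, 0 ≤ deriv f x := by
    intro x hx
    obtain ⟨hx1, hx2⟩ := hx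
    have hx2' : x/2 < Real.arctan t := by rw [hαs] at hx2; linarith
    have hx1' : π/4 < x/2 := by linarith
    have hm1 : -(π/2) < x/2 := by linarith
    have hm2 : x/2 < π/2 := by linarith
    set v : ℝ := Real.tan (x/2) with hv_def
    have hxv : x = 2 * Real.arctan v := by
      rw [hv_def, Real.arctan_tan hm1 hm2]; ring
    have hv1 : 1 < v := by
      calc (1:ℝ) = Real.tan (π/4) := Real.tan_pi_div_four.symm
      _ < v := Real.strictMonoOn_tan ⟨by linarith, by linarith⟩ ⟨hm1, hm2⟩ hx1'
    have hvt : v < t := by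
      have h := Real.strictMonoOn_tan ⟨hm1, hm2⟩
        ⟨lt_trans (by linarith) hat, hat2⟩ hx2'
      rwa [Real.tan_arctan] at h
    have hbr : 0 < t^3 + t^2*v + t*v^2 + v^3 + 6*(t^2 + t*v + v^2) - 10 := by nlinarith
    have hQv : v^4 + 6*v^3 - 10*v - 1 ≤ 0 := by nlinarith [mul_pos (sub_pos.2 hvt) hbr]
    rw [hdf]
    show 0 ≤ (1/2) * (Real.sin x + Real.cos x + 2 * Real.sin (2*x))
    rw [hxv, key v]
    apply div_nonneg (by linarith) (by positivity)
  have hsign2 : ∀ x ∈ Set.Ioo αstar π, deriv f x ≤ 0 := by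
    intro x hx
    obtain ⟨hx1, hx2⟩ := hx
    have hx1' : Real.arctan t < x/2 := by rw [hαs] at hx1; linarith
    have hm1 : -(π/2) < x/2 := by linarith
    have hm2 : x/2 < π/2 := by linarith
    set v : ℝ := Real.tan (x/2) with hv_def
    have hxv : x = 2 * Real.arctan v := by
      rw [hv_def, Real.arctan_tan hm1 hm2]; ring
    have hvt : t < v := by
      have h := Real.strictMonoOn_tan
        ⟨lt_trans (by linarith) hat, hat2⟩ ⟨hm1, hm2⟩ hx1'
      rwa [Real.tan_arctan] at h
    have hbr : 0 < v^3 + v^2*t + v*t^2 + t^3 + 6*(v^2 + v*t + t^2) - 10 := by nlinarith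
    have hQv : 0 ≤ v^4 + 6*v^3 - 10*v - 1 := by nlinarith [mul_pos (sub_pos.2 hvt) hbr]
    rw [hdf]
    show (1/2) * (Real.sin x + Real.cos x + 2 * Real.sin (2*x)) ≤ 0
    rw [hxv, key v]
    apply div_nonpos_of_nonpos_of_nonneg (by linarith) (by positivity)
  -- continuity and differentiability
  have hcont : Continuous f := by
    rw [hfg]; fun_prop
  have hdiff : Differentiable ℝ f := by
    intro x
    rw [hfg]
    exact (hd1 x).differentiableAt
  -- monotonicity
  have hmono : MonotoneOn f (Set.Icc (π/2) αstar) := by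
    apply monotoneOn_of_deriv_nonneg (convex_Icc _ _) hcont.continuousOn
      (fun x _ => (hdiff x).differentiableWithinAt)
    intro x hx
    rw [interior_Icc] at hx
    exact hsign1 x hx
  have hanti : AntitoneOn f (Set.Icc αstar π) := by
    apply antitoneOn_of_deriv_nonpos (convex_Icc _ _) hcont.continuousOn
      (fun x _ => (hdiff x).differentiableWithinAt)
    intro x hx
    rw [interior_Icc] at hx
    exact hsign2 x hx
  refine ⟨?_, ?_, ?_⟩
  · intro α hα
    obtain ⟨hα1, hα2⟩ := hα
    rcases le_total α αstar with h | h
    · exact hmono ⟨hα1, h⟩ ⟨le_of_lt hαs1, le_refl _⟩ h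
    · exact hanti ⟨le_refl _, le_of_lt hαs2⟩ ⟨h, hα2⟩ h
  · rw [hdf]
    show (1/2) * (Real.sin αstar + Real.cos αstar + 2 * Real.sin (2*αstar)) = 0
    rw [hαs, key t, hQ]
    norm_num
  · rw [hdf]
    have hval := (hd2 αstar).deriv
    rw [hval]
    have hsin : Real.sin αstar = 2*t/(1+t^2) := by rw [hαs, sin_two_arctan]
    have hcos : Real.cos αstar = (1-t^2)/(1+t^2) := by rw [hαs, cos_two_arctan]
    have hcos2 : Real.cos (2*αstar) = 2 * Real.cos αstar ^ 2 - 1 := Real.cos_two_mul _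
    rw [hcos2, hsin, hcos]
    have hv : (0:ℝ) < 1 + t^2 := by positivity
    have hR : 3*t^4 - 2*t^3 - 24*t^2 - 2*t + 5 < 0 := by nlinarith
    have heq : (1/2) * ((1-t^2)/(1+t^2) - 2*t/(1+t^2) + 4*(2*((1-t^2)/(1+t^2))^2 - 1))
        = (3*t^4 - 2*t^3 - 24*t^2 - 2*t + 5) / (2*(1+t^2)^2) := by
      field_simp
      ring
    rw [heq]
    apply div_neg_of_neg_of_pos hR (by positivity)
end
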